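/- For a state σ₀ and an invertible positive ρ₀ in a finite-dimensional C*-algebra A₀, the equation b₀ ρ₀ b₀ = σ₀ has the unique positive solution b₀ = σ₀^{1/2}(σ₀^{1/2} ρ₀ σ₀^{1/2})^{-1/2} σ₀^{1/2}, where the inverse is taken on the support of σ₀^{1/2} ρ₀ σ₀^{1/2}. -/

import Mathlib

open Matrix ComplexOrder

variable {n m : Type*} [Fintype n] [DecidableEq n] [Fintype m] [DecidableEq m]

/-- Partial trace over the first tensor factor `B` of `B ⊗ A`,
realized on matrices indexed by products. -/
noncomputable def ptrace (X : Matrix (m × n) (m × n) ℂ) : Matrix n n ℂ :=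
  Matrix.of fun a b => ∑ i, X (i, a) (i, b)

/-- The Choi matrix of a linear map `Φ : A → B` (on full matrix algebras). -/
noncomputable def choi (Φ : Matrix n n ℂ →ₗ[ℂ] Matrix m m ℂ) : Matrix (m × n) (m × n) ℂ :=
  Matrix.of fun p q => Φ (Matrix.single p.2 q.2 1) p.1 q.1

/-- Hilbert–Schmidt orthogonal complement of a subspace. -/
noncomputable def hsPerp {k : Type*} [Fintype k] (J : Submodule ℂ (Matrix k k ℂ)) :
    Submodule ℂ (Matrix k k ℂ) where
  carrier := {x | ∀ a ∈ J, Matrix.trace (aᴴ * x) = 0}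
  add_mem' := by
    intro x y hx hy a ha
    simp [Matrix.mul_add, hx a ha, hy a ha]
  zero_mem' := by intro a ha; simp
  smul_mem' := by
    intro c x hx a ha
    simp [Matrix.mul_smul, hx a ha]

/-- Hilbert–Schmidt orthogonal complement of the transpose `J^T` of a subspace `J`. -/
def hsPerpT {k : Type*} [Fintype k] (J : Submodule ℂ (Matrix k k ℂ)) : Set (Matrix k k ℂ) :=
  {x | ∀ a ∈ J, Matrix.trace (aᵀᴴ * x) = 0}

/-- A subspace is positively generated if it is spanned by its positive elements. -/
def PositivelyGenerated {k : Type*} [Fintype k] (J : Submodule ℂ (Matrix k k ℂ)) : Prop :=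
  J = Submodule.span ℂ {a : Matrix k k ℂ | a ∈ J ∧ a.PosSemidef}

/-- `P` is the support projection of `X`: a Hermitian idempotent with the same range. -/
def IsSupportProj {k : Type*} [Fintype k] [DecidableEq k] (X P : Matrix k k ℂ) : Prop :=
  P.IsHermitian ∧ P * P = P ∧
    LinearMap.range (Matrix.toLin' P) = LinearMap.range (Matrix.toLin' X)
open scoped Classical

/-- Positive square root of a positive semidefinite matrix (junk value `0` otherwise). -/
noncomputable def msqrt {k : Type*} [Fintype k] [DecidableEq k] (x : Matrix k k ℂ) :
    Matrix k k ℂ :=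
  if h : x.PosSemidef then
    (h.1.eigenvectorUnitary : Matrix k k ℂ) *
      Matrix.diagonal ((↑) ∘ (Real.sqrt ·) ∘ h.1.eigenvalues) *
      (star h.1.eigenvectorUnitary : Matrix k k ℂ)
  else 0

/-- `x^{-1/2}`, with the inverse taken on the support of `x` (for Hermitian `x`;
junk value `0` otherwise). -/
noncomputable def invSqrtOnSupp {k : Type*} [Fintype k] [DecidableEq k]
    (x : Matrix k k ℂ) : Matrix k k ℂ :=
  if h : x.IsHermitian then
    (h.eigenvectorUnitary : Matrix k k ℂ) *
      Matrix.diagonal (fun i => ((Real.sqrt (h.eigenvalues i) : ℂ))⁻¹) *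
      (star h.eigenvectorUnitary : Matrix k k ℂ)
  else 0

/-- The expression `b₀ = σ₀^{1/2} (σ₀^{1/2} ρ₀ σ₀^{1/2})^{-1/2} σ₀^{1/2}`. -/
noncomputable def bform {k : Type*} [Fintype k] [DecidableEq k]
    (ρ₀ σ₀ : Matrix k k ℂ) : Matrix k k ℂ :=
  msqrt σ₀ * invSqrtOnSupp (msqrt σ₀ * ρ₀ * msqrt σ₀) * msqrt σ₀


section Aux

variable {n' : Type*} [Fintype n'] [DecidableEq n']

lemma msqrt_psd {x : Matrix n' n' ℂ} (hx : x.PosSemidef) : (msqrt x).PosSemidef := by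
  rw [msqrt, dif_pos hx]
  have hd : (Matrix.diagonal ((↑) ∘ (Real.sqrt ·) ∘ hx.1.eigenvalues : n' → ℂ)).PosSemidef := by
    rw [Matrix.posSemidef_diagonal_iff]
    intro i
    simp only [Function.comp_apply]
    exact_mod_cast Real.sqrt_nonneg _
  have h2 := hd.conjTranspose_mul_mul_same (star (hx.1.eigenvectorUnitary : Matrix n' n' ℂ))
  rw [← Matrix.star_eq_conjTranspose, star_star] at h2
  exact h2

lemma msqrt_mul_self {x : Matrix n' n' ℂ} (hx : x.PosSemidef) : msqrt x * msqrt x = x := by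
  set U : Matrix n' n' ℂ := (hx.1.eigenvectorUnitary : Matrix n' n' ℂ) with hUdef
  have hU1 : star U * U = 1 := (Matrix.mem_unitaryGroup_iff'.mp (hx.1.eigenvectorUnitary).2)
  set d : n' → ℂ := (↑) ∘ (Real.sqrt ·) ∘ hx.1.eigenvalues with hd
  have hm : msqrt x = U * Matrix.diagonal d * star U := by
    rw [msqrt, dif_pos hx]
  have hs : x = U * Matrix.diagonal (fun i => (hx.1.eigenvalues i : ℂ)) * star U :=
    hx.1.spectral_theorem
  have e : (U * Matrix.diagonal d * star U) * (U * Matrix.diagonal d * star U)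
      = U * (Matrix.diagonal d * (star U * U) * Matrix.diagonal d) * star U := by
    simp only [Matrix.mul_assoc]
  rw [hm, e, hU1, Matrix.mul_one, Matrix.diagonal_mul_diagonal]
  conv_rhs => rw [hs]
  have hdd : (fun i => d i * d i) = fun i => (hx.1.eigenvalues i : ℂ) := by
    funext i
    simp only [hd, Function.comp_apply]
    rw [← Complex.ofReal_mul, Real.mul_self_sqrt (hx.eigenvalues_nonneg i)]
  rw [hdd]

lemma psd_eq_of_sq_eq_sq {a b : Matrix n' n' ℂ} (ha : a.PosSemidef) (hb : b.PosSemidef)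
    (h : a ^ 2 = b ^ 2) : a = b := by
  open MatrixOrder in
  exact (CFC.sq_eq_sq_iff a b (Matrix.nonneg_iff_posSemidef.mpr ha)
    (Matrix.nonneg_iff_posSemidef.mpr hb)).mp h

lemma cancel_posdef {ρ X : Matrix n' n' ℂ} (hρ : ρ.PosDef) (h : Xᴴ * ρ * X = 0) : X = 0 := by
  have hr := msqrt_psd hρ.posSemidef
  have hrr := msqrt_mul_self hρ.posSemidef
  have h2 : (msqrt ρ * X)ᴴ * (msqrt ρ * X) = 0 := by
    rw [Matrix.conjTranspose_mul, hr.1.eq]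
    calc Xᴴ * msqrt ρ * (msqrt ρ * X)
        = Xᴴ * (msqrt ρ * msqrt ρ) * X := by
          simp only [Matrix.mul_assoc]
      _ = 0 := by rw [hrr]; simpa only [Matrix.mul_assoc] using h
  have h3 : msqrt ρ * X = 0 := by
    rwa [Matrix.conjTranspose_mul_self_eq_zero] at h2
  have h4 : ρ * X = 0 := by
    rw [← hrr, Matrix.mul_assoc, h3, Matrix.mul_zero]
  have hu : Invertible ρ := (hρ.isUnit.invertible)
  calc X = ⅟ρ * (ρ * X) := by rw [← Matrix.mul_assoc, invOf_mul_self, Matrix.one_mul]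
    _ = 0 := by rw [h4, Matrix.mul_zero]

lemma invSqrt_psd {x : Matrix n' n' ℂ} (hx : x.PosSemidef) : (invSqrtOnSupp x).PosSemidef := by
  rw [invSqrtOnSupp, dif_pos hx.1]
  set U : Matrix n' n' ℂ := (hx.1.eigenvectorUnitary : Matrix n' n' ℂ) with hU
  have hd : (Matrix.diagonal (fun i => ((Real.sqrt (hx.1.eigenvalues i) : ℂ))⁻¹)).PosSemidef := by
    rw [Matrix.posSemidef_diagonal_iff]
    intro i
    rw [← Complex.ofReal_inv]
    exact_mod_cast inv_nonneg.mpr (Real.sqrt_nonneg _)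
  have h2 := hd.conjTranspose_mul_mul_same (star U)
  rw [← Matrix.star_eq_conjTranspose, star_star] at h2
  exact h2

lemma P_mul_x {x : Matrix n' n' ℂ} (hx : x.PosSemidef) :
    (invSqrtOnSupp x * x * invSqrtOnSupp x) * x = x ∧
      x * (invSqrtOnSupp x * x * invSqrtOnSupp x) = x := by
  have hH := hx.1
  set U : Matrix n' n' ℂ := (hH.eigenvectorUnitary : Matrix n' n' ℂ) with hUdef
  have hU1 : star U * U = 1 := (Matrix.mem_unitaryGroup_iff'.mp (hH.eigenvectorUnitary).2)
  set μ : n' → ℝ := hH.eigenvalues with hμdef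
  have hμ : ∀ i, 0 ≤ μ i := hx.eigenvalues_nonneg
  set μc : n' → ℂ := fun i => (μ i : ℂ) with hμcdef
  have hspec : x = U * Matrix.diagonal μc * star U := by
    exact hH.spectral_theorem
  set f : n' → ℂ := fun i => ((Real.sqrt (μ i) : ℂ))⁻¹ with hfdef
  have hq : invSqrtOnSupp x = U * Matrix.diagonal f * star U := by
    rw [invSqrtOnSupp, dif_pos hx.1]
  have key : ∀ (g h : n' → ℂ),
      (U * Matrix.diagonal g * star U) * (U * Matrix.diagonal h * star U)
        = U * Matrix.diagonal (g * h) * star U := by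
    intro g h
    have e : (U * Matrix.diagonal g * star U) * (U * Matrix.diagonal h * star U)
        = U * (Matrix.diagonal g * (star U * U) * Matrix.diagonal h) * star U := by
      simp only [Matrix.mul_assoc]
    rw [e, hU1, Matrix.mul_one, Matrix.diagonal_mul_diagonal]; rfl
  have hfμf : ∀ i, f i * μc i * f i * μc i = μc i := by
    intro i
    by_cases h : μ i = 0
    · simp [hfdef, hμcdef, h]
    · have ha : ((Real.sqrt (μ i) : ℂ)) * ((Real.sqrt (μ i) : ℂ)) = μc i := by
        rw [← Complex.ofReal_mul, Real.mul_self_sqrt (hμ i)]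
      have hne : ((Real.sqrt (μ i) : ℂ)) ≠ 0 := by
        have : Real.sqrt (μ i) ≠ 0 := Real.sqrt_ne_zero'.mpr (lt_of_le_of_ne (hμ i) (Ne.symm h))
        exact_mod_cast this
      rw [← ha]
      simp only [hfdef]
      field_simp
  have e1 : f * μc * f * μc = μc := by
    funext i
    simpa only [Pi.mul_apply] using hfμf i
  have e2 : μc * (f * μc * f) = μc := by
    funext i
    simp only [Pi.mul_apply]
    rw [mul_comm (μc i)]
    simpa only [Pi.mul_apply] using hfμf i
  constructor
  · rw [hq, hspec, key, key, key, e1]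
  · rw [hq, hspec, key, key, key, e2]

end Aux

/-- for a state `σ₀` and invertible positive `ρ₀`,
`b₀ ρ₀ b₀ = σ₀` has the unique positive solution
`b₀ = σ₀^{1/2}(σ₀^{1/2} ρ₀ σ₀^{1/2})^{-1/2} σ₀^{1/2}`. -/
theorem unique_positive_solution
    (ρ₀ σ₀ : Matrix n n ℂ) (hρ : ρ₀.PosDef) (hσ : σ₀.PosSemidef)
    (hσtr : Matrix.trace σ₀ = 1) :
    (bform ρ₀ σ₀).PosSemidef ∧ bform ρ₀ σ₀ * ρ₀ * bform ρ₀ σ₀ = σ₀ ∧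
      ∀ b : Matrix n n ℂ, b.PosSemidef → b * ρ₀ * b = σ₀ → b = bform ρ₀ σ₀ := by
  have hs2 : msqrt σ₀ = msqrt σ₀ := rfl
  set s := msqrt σ₀ with hsdef
  have hsH : s.IsHermitian := (msqrt_psd hσ).1
  have hss : s * s = σ₀ := msqrt_mul_self hσ
  have hx : (s * ρ₀ * s).PosSemidef := by
    have := hρ.posSemidef.conjTranspose_mul_mul_same s
    rwa [hsH.eq] at this
  set x := s * ρ₀ * s with hxdef
  set q := invSqrtOnSupp x with hqdef
  have hqpsd := invSqrt_psd hx
  obtain ⟨hPx, hxP⟩ := P_mul_x hx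
  set P := q * x * q with hPdef
  have hPH : P.IsHermitian := by
    rw [Matrix.IsHermitian, hPdef]
    simp only [hqdef, Matrix.conjTranspose_mul, hqpsd.1.eq, hx.1.eq, Matrix.mul_assoc]
  have hXzero : s * (1 - P) = 0 := by
    apply cancel_posdef hρ
    have hconj : (s * (1 - P))ᴴ = (1 - P) * s := by
      rw [Matrix.conjTranspose_mul, Matrix.conjTranspose_sub, Matrix.conjTranspose_one,
        hPH.eq, hsH.eq]
    rw [hconj]
    calc (1 - P) * s * ρ₀ * (s * (1 - P))
        = (1 - P) * (s * ρ₀ * s) * (1 - P) := by noncomm_ring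
      _ = (1 - P) * x * (1 - P) := by rw [← hxdef]
      _ = x - x * P - (P * x - P * x * P) := by noncomm_ring
      _ = 0 := by rw [hxP, hPx, hxP]; simp
  have hsP : s * P = s := by
    have h := hXzero
    rw [Matrix.mul_sub, Matrix.mul_one, sub_eq_zero] at h
    exact h.symm
  have hb : bform ρ₀ σ₀ = s * q * s := by
    rw [bform, ← hsdef, ← hxdef, ← hqdef]
  have hmain : bform ρ₀ σ₀ * ρ₀ * bform ρ₀ σ₀ = σ₀ := by
    rw [hb]
    calc s * q * s * ρ₀ * (s * q * s)
        = s * (q * (s * ρ₀ * s) * q) * s := by noncomm_ring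
      _ = s * (q * x * q) * s := by rw [← hxdef]
      _ = s * P * s := by rw [← hPdef]
      _ = σ₀ := by rw [hsP, hss]
  have hbpsd : (bform ρ₀ σ₀).PosSemidef := by
    rw [hb]
    have := hqpsd.conjTranspose_mul_mul_same s
    rwa [hsH.eq] at this
  refine ⟨hbpsd, hmain, ?_⟩
  intro b hbp hbe
  set r := msqrt ρ₀ with hrdef
  have hrH : r.IsHermitian := (msqrt_psd hρ.posSemidef).1
  have hrr : r * r = ρ₀ := msqrt_mul_self hρ.posSemidef
  have sq_eq : ∀ c : Matrix n n ℂ, c * ρ₀ * c = σ₀ → (r * c * r) ^ 2 = r * σ₀ * r := by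
    intro c hc
    rw [pow_two]
    calc (r * c * r) * (r * c * r) = r * (c * (r * r) * c) * r := by noncomm_ring
      _ = r * (c * ρ₀ * c) * r := by rw [hrr]
      _ = r * σ₀ * r := by rw [hc]
  have p1 : (r * b * r).PosSemidef := by
    have := hbp.conjTranspose_mul_mul_same r
    rwa [hrH.eq] at this
  have p2 : (r * bform ρ₀ σ₀ * r).PosSemidef := by
    have := hbpsd.conjTranspose_mul_mul_same r
    rwa [hrH.eq] at this
  have heq : r * b * r = r * bform ρ₀ σ₀ * r :=
    psd_eq_of_sq_eq_sq p1 p2 (by rw [sq_eq b hbe, sq_eq _ hmain])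
  have hdet : IsUnit r.det := by
    rw [isUnit_iff_ne_zero]
    intro h0
    have : ρ₀.det = 0 := by rw [← hrr, Matrix.det_mul, h0, mul_zero]
    exact hρ.det_pos.ne' this
  have : Invertible r := Matrix.invertibleOfIsUnitDet r hdet
  have cancel : ∀ y : Matrix n n ℂ, ⅟r * (r * y * r) * ⅟r = y := by
    intro y
    calc ⅟r * (r * y * r) * ⅟r = (⅟r * r) * y * (r * ⅟r) := by noncomm_ring
      _ = y := by rw [invOf_mul_self, mul_invOf_self, Matrix.one_mul, Matrix.mul_one]
  calc b = ⅟r * (r * b * r) * ⅟r := (cancel b).symm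
    _ = ⅟r * (r * bform ρ₀ σ₀ * r) * ⅟r := by rw [heq]
    _ = bform ρ₀ σ₀ := cancel _
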